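/- Let G be an r-locally 2-connected graph and let {v,w} be an r-local 2-separator. Then every connected component of the punctured explorer-neighbourhood Expl(v,w) - v - w has both v and w in its neighbourhood. -/

import Mathlib

open SimpleGraph

universe u

namespace LocalSep

variable {V : Type u}

/-- The ball of radius `r/2` around `v`: vertices of distance at most `⌊r/2⌋` from `v`;
if `r` is even, edges joining two vertices of distance exactly `r/2` are removed. -/
def ballVerts (G : SimpleGraph V) (v : V) (r : ℕ) : Set V :=
  {u | G.Reachable v u ∧ G.dist v u ≤ r / 2}

def ball (G : SimpleGraph V) (v : V) (r : ℕ) : G.Subgraph where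
  verts := ballVerts G v r
  Adj u u' := G.Adj u u' ∧ u ∈ ballVerts G v r ∧ u' ∈ ballVerts G v r ∧
    (Even r → ¬(G.dist v u = r / 2 ∧ G.dist v u' = r / 2))
  adj_sub h := h.1
  edge_vert h := h.2.1
  symm := ⟨fun u u' h => ⟨h.1.symm, h.2.2.1, h.2.1, fun he hc => h.2.2.2 he ⟨hc.2, hc.1⟩⟩⟩

/-- `v` is an `r`-local cutvertex if the punctured ball `B_{r/2}(v) - v` is disconnected. -/
def IsLocalCutvertex (G : SimpleGraph V) (r : ℕ) (v : V) : Prop :=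
  ¬ ((ball G v r).deleteVerts {v}).coe.Connected

def HasShortCycle (G : SimpleGraph V) (r : ℕ) : Prop :=
  ∃ (u : V) (c : G.Walk u u), c.IsCycle ∧ c.length ≤ r

/-- A connected graph is `r`-locally 2-connected if it has no `r`-local cutvertex
and contains a cycle of length at most `r`. -/
def LocallyTwoConnected (G : SimpleGraph V) (r : ℕ) : Prop :=
  G.Connected ∧ (∀ v : V, ¬ IsLocalCutvertex G r v) ∧ HasShortCycle G r

/-- The core of `(a₁, a₂)`: all vertices on shortest `a₁`–`a₂` paths. -/
def core (G : SimpleGraph V) (a₁ a₂ : V) : Set V :=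
  {x | ∃ p : G.Walk a₁ a₂, p.IsPath ∧ p.length = G.dist a₁ a₂ ∧ x ∈ p.support}

/-- A walk is contained in a subgraph. -/
def WalkIn {G : SimpleGraph V} (B : G.Subgraph) {x y : V} (p : G.Walk x y) : Prop :=
  p.toSubgraph ≤ B

/-- The label of a vertex `u` in a ball `B`: the set of (supports of) shortest paths
from the core `C` to `u` contained in `B`. -/
def labelIn (G : SimpleGraph V) (B : G.Subgraph) (C : Set V) (u : V) : Set (List V) :=
  {l | ∃ c ∈ C, ∃ p : G.Walk c u, p.IsPath ∧ WalkIn B p ∧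
    (∀ c' ∈ C, ∀ q : G.Walk c' u, q.IsPath → WalkIn B q → p.length ≤ q.length) ∧
    l = p.support}

/-- A potential vertex of the explorer-neighbourhood: a vertex together with a label. -/
abbrev EVert (V : Type u) : Type u := V × Set (List V)

/-- `p` is the copy of the vertex `p.1` in the labelled ball around `a ∈ {a₁, a₂}`. -/
def inCopy (G : SimpleGraph V) (a₁ a₂ : V) (r : ℕ) (a : V) (p : EVert V) : Prop :=
  p.1 ∈ ballVerts G a r ∧ p.2 = labelIn G (ball G a r) (core G a₁ a₂) p.1

/-- Vertices of the explorer-neighbourhood `Expl(a₁,a₂)`. -/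
def explVerts (G : SimpleGraph V) (a₁ a₂ : V) (r : ℕ) : Set (EVert V) :=
  {p | inCopy G a₁ a₂ r a₁ p ∨ inCopy G a₁ a₂ r a₂ p}

/-- The explorer-neighbourhood `Expl(a₁,a₂)`: the union of the two labelled balls,
where two copies of a vertex are identified iff their labels agree. -/
def expl (G : SimpleGraph V) (a₁ a₂ : V) (r : ℕ) : SimpleGraph (EVert V) where
  Adj p q :=
    (inCopy G a₁ a₂ r a₁ p ∧ inCopy G a₁ a₂ r a₁ q ∧ (ball G a₁ r).Adj p.1 q.1) ∨
    (inCopy G a₁ a₂ r a₂ p ∧ inCopy G a₁ a₂ r a₂ q ∧ (ball G a₂ r).Adj p.1 q.1)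
  symm := by
    constructor
    intro p q h
    rcases h with ⟨h1, h2, h3⟩ | ⟨h1, h2, h3⟩
    · exact Or.inl ⟨h2, h1, h3.symm⟩
    · exact Or.inr ⟨h2, h1, h3.symm⟩
  loopless := by
    constructor
    intro p h
    rcases h with ⟨-, -, h⟩ | ⟨-, -, h⟩ <;> exact h.adj_sub.ne rfl

/-- Vertices of the punctured explorer-neighbourhood `Expl(a₁,a₂) - a₁ - a₂`. -/
def pexplVerts (G : SimpleGraph V) (a₁ a₂ : V) (r : ℕ) : Set (EVert V) :=
  {p | p ∈ explVerts G a₁ a₂ r ∧ p.1 ≠ a₁ ∧ p.1 ≠ a₂}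

/-- The punctured explorer-neighbourhood `Expl(a₁,a₂) - a₁ - a₂`. -/
def pexpl (G : SimpleGraph V) (a₁ a₂ : V) (r : ℕ) :
    SimpleGraph (pexplVerts G a₁ a₂ r) :=
  SimpleGraph.induce (pexplVerts G a₁ a₂ r) (expl G a₁ a₂ r)

/-- `{v,w}` is an `r`-local 2-separator: `v,w` have distance at most `r/2` and the
punctured explorer-neighbourhood is disconnected. -/
def IsLocalTwoSep (G : SimpleGraph V) (r : ℕ) (v w : V) : Prop :=
  v ≠ w ∧ G.Reachable v w ∧ 2 * G.dist v w ≤ r ∧ ¬ (pexpl G v w r).Connected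

/-- The pair `(p,q)` of vertices of `Expl(b₁,b₂)` crosses the local 2-separator `{b₁,b₂}`:
they lie in different components of the punctured explorer-neighbourhood and there is a cycle
of length at most `r` through them containing a copy of `b₁` or `b₂`. -/
def CrossesPair (G : SimpleGraph V) (r : ℕ) (b₁ b₂ : V) (p q : EVert V) : Prop :=
  ∃ (hp : p ∈ pexplVerts G b₁ b₂ r) (hq : q ∈ pexplVerts G b₁ b₂ r),
    ¬ (pexpl G b₁ b₂ r).Reachable ⟨p, hp⟩ ⟨q, hq⟩ ∧
    ∃ (u : EVert V) (c : (expl G b₁ b₂ r).Walk u u), c.IsCycle ∧ c.length ≤ r ∧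
      p ∈ c.support ∧ q ∈ c.support ∧ ∃ z ∈ c.support, z.1 = b₁ ∨ z.1 = b₂

/-- `{a₁,a₂}` crosses `{b₁,b₂}`: some copies of `a₁`, `a₂` cross `{b₁,b₂}`. -/
def Crosses (G : SimpleGraph V) (r : ℕ) (a₁ a₂ b₁ b₂ : V) : Prop :=
  ∃ p q : EVert V, p.1 = a₁ ∧ q.1 = a₂ ∧ CrossesPair G r b₁ b₂ p q

/-- Some copy of `x` lies in the same component of `Expl(v,w) - v - w` as some copy of `y`. -/
def CopyReach (G : SimpleGraph V) (r : ℕ) (v w x y : V) : Prop :=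
  ∃ (p q : EVert V) (hp : p ∈ pexplVerts G v w r) (hq : q ∈ pexplVerts G v w r),
    p.1 = x ∧ q.1 = y ∧ (pexpl G v w r).Reachable ⟨p, hp⟩ ⟨q, hq⟩

/-- A cycle through `a₁` alternating between `{a₁,a₂}` and `{b₁,b₂}`: the four vertices are
distinct and `b₁`, `b₂` lie on different arcs of the cycle between `a₁` and `a₂`. -/
def AltCycle (G : SimpleGraph V) (a₁ a₂ b₁ b₂ : V) (c : G.Walk a₁ a₁) : Prop :=
  c.IsCycle ∧ b₁ ≠ b₂ ∧ b₁ ∉ ({a₁, a₂} : Set V) ∧ b₂ ∉ ({a₁, a₂} : Set V) ∧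
  ∃ (p : G.Walk a₁ a₂) (q : G.Walk a₂ a₁), c = p.append q ∧
    ((b₁ ∈ p.support ∧ b₂ ∈ q.support) ∨ (b₂ ∈ p.support ∧ b₁ ∈ q.support))

/-- `S` is generated over `𝔽₂` by members of `C` (sum = symmetric difference). -/
def GeneratedBy {α : Type*} (C : Set (Set (Sym2 α))) (S : Set (Sym2 α)) : Prop :=
  ∃ l : List (Set (Sym2 α)), (∀ A ∈ l, A ∈ C) ∧ l.foldr symmDiff ∅ = S

/-- The edge set of a walk. -/
def walkEdgeSet {α : Type*} {H : SimpleGraph α} {x y : α} (c : H.Walk x y) : Set (Sym2 α) :=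
  {e | e ∈ c.edges}


/-! ### Auxiliary lemmas for `stmt8` -/

section Stmt8Aux

variable {G : SimpleGraph V} {r : ℕ} {B : G.Subgraph}

lemma walkIn_nil {x : V} : WalkIn B (Walk.nil : G.Walk x x) ↔ x ∈ B.verts := by
  rw [WalkIn, Walk.toSubgraph, singletonSubgraph_le_iff]

lemma walkIn_cons {x y z : V} {h : G.Adj x y} {p : G.Walk y z} :
    WalkIn B (Walk.cons h p) ↔ B.Adj x y ∧ WalkIn B p := by
  rw [WalkIn, Walk.toSubgraph, sup_le_iff]
  constructor
  · rintro ⟨h1, h2⟩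
    exact ⟨h1.2 (by simp), h2⟩
  · rintro ⟨h1, h2⟩
    exact ⟨subgraphOfAdj_le_of_adj B h1, h2⟩

lemma WalkIn.mem_verts {x y t : V} {p : G.Walk x y} (hw : WalkIn B p) (ht : t ∈ p.support) :
    t ∈ B.verts := by
  induction p with
  | nil =>
    rw [walkIn_nil] at hw
    rw [Walk.support_nil, List.mem_singleton] at ht
    exact ht ▸ hw
  | cons h q ih =>
    rw [walkIn_cons] at hw
    rw [Walk.support_cons, List.mem_cons] at ht
    rcases ht with rfl | ht
    · exact hw.1.fst_mem
    · exact ih hw.2 ht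

lemma WalkIn.adj_of_mem_edges {x y a b : V} {p : G.Walk x y} (hw : WalkIn B p)
    (he : s(a, b) ∈ p.edges) : B.Adj a b := by
  induction p with
  | nil => simp [Walk.edges_nil] at he
  | cons h q ih =>
    rw [walkIn_cons] at hw
    rw [Walk.edges_cons, List.mem_cons] at he
    rcases he with he | he
    · rcases Sym2.eq_iff.mp he with ⟨rfl, rfl⟩ | ⟨rfl, rfl⟩
      · exact hw.1
      · exact hw.1.symm
    · exact ih hw.2 he

lemma walkIn_of_forall {x y : V} {p : G.Walk x y}
    (hv : ∀ t ∈ p.support, t ∈ B.verts)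
    (he : ∀ a b, s(a, b) ∈ p.edges → B.Adj a b) : WalkIn B p := by
  induction p with
  | nil => exact walkIn_nil.mpr (hv _ (Walk.start_mem_support _))
  | cons h q ih =>
    rw [walkIn_cons]
    refine ⟨he _ _ (by rw [Walk.edges_cons]; exact List.mem_cons_self), ?_⟩
    exact ih (fun t ht => hv t (by rw [Walk.support_cons]; exact List.mem_cons_of_mem _ ht))
      (fun a b hab => he a b (by rw [Walk.edges_cons]; exact List.mem_cons_of_mem _ hab))

lemma WalkIn.takeUntil [DecidableEq V] {x y t : V} {p : G.Walk x y} (hw : WalkIn B p)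
    (ht : t ∈ p.support) : WalkIn B (p.takeUntil t ht) :=
  walkIn_of_forall (fun s hs => hw.mem_verts (p.support_takeUntil_subset ht hs))
    (fun a b hab => hw.adj_of_mem_edges (p.edges_takeUntil_subset ht hab))

lemma WalkIn.dropUntil [DecidableEq V] {x y t : V} {p : G.Walk x y} (hw : WalkIn B p)
    (ht : t ∈ p.support) : WalkIn B (p.dropUntil t ht) :=
  walkIn_of_forall (fun s hs => hw.mem_verts (p.support_dropUntil_subset ht hs))
    (fun a b hab => hw.adj_of_mem_edges (p.edges_dropUntil_subset ht hab))

lemma walkIn_reverse {x y : V} {p : G.Walk x y} : WalkIn B p.reverse ↔ WalkIn B p := by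
  rw [WalkIn, WalkIn, Walk.toSubgraph_reverse]

lemma WalkIn.mono {B' : G.Subgraph} (hBB : B ≤ B') {x y : V} {p : G.Walk x y}
    (h : WalkIn B p) : WalkIn B' p := le_trans h hBB

lemma walkIn_ball_aux {a : V} :
    ∀ {s x : V} (p : G.Walk s x), G.dist a x ≤ r / 2 → G.Reachable a s →
      G.dist a s + p.length = G.dist a x → WalkIn (ball G a r) p := by
  intro s x p
  induction p with
  | nil =>
    intro hx hr hd
    rw [Walk.length_nil] at hd
    exact walkIn_nil.mpr ⟨hr, by omega⟩
  | @cons s s' x h q ih =>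
    intro hx hr hd
    rw [Walk.length_cons] at hd
    have hrs' : G.Reachable a s' := hr.trans ⟨h.toWalk⟩
    have h1 : G.dist a s' ≤ G.dist a s + 1 := by
      obtain ⟨pa, hpa⟩ := hr.exists_walk_length_eq_dist
      have h2 := dist_le (pa.concat h)
      rwa [Walk.length_concat, hpa] at h2
    have h2 : G.dist a x ≤ G.dist a s' + q.length := by
      obtain ⟨pb, hpb⟩ := hrs'.exists_walk_length_eq_dist
      have h3 := dist_le (pb.append q)
      rwa [Walk.length_append, hpb] at h3
    have hds' : G.dist a s' = G.dist a s + 1 := by omega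
    rw [walkIn_cons]
    refine ⟨⟨h, ⟨hr, by omega⟩, ⟨hrs', by omega⟩, fun _ hc => ?_⟩, ih hx hrs' (by omega)⟩
    obtain ⟨hc1, hc2⟩ := hc
    omega

lemma walkIn_ball_start {a x : V} (p : G.Walk a x) (hlen : p.length = G.dist a x)
    (hx : G.dist a x ≤ r / 2) : WalkIn (ball G a r) p :=
  walkIn_ball_aux p hx (Reachable.refl a) (by rw [SimpleGraph.dist_self, hlen, Nat.zero_add])

lemma walkIn_ball_end {a x : V} (p : G.Walk x a) (hlen : p.length = G.dist x a)
    (hx : G.dist x a ≤ r / 2) : WalkIn (ball G a r) p := by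
  rw [← walkIn_reverse]
  exact walkIn_ball_start p.reverse (by rw [Walk.length_reverse, hlen, SimpleGraph.dist_comm])
    (by rwa [SimpleGraph.dist_comm])

lemma exists_geodesic {x y : V} (h : G.Reachable x y) :
    ∃ p : G.Walk x y, p.IsPath ∧ p.length = G.dist x y := by
  classical
  obtain ⟨p, hp⟩ := h.exists_walk_length_eq_dist
  refine ⟨p.bypass, p.bypass_isPath, le_antisymm ?_ (dist_le _)⟩
  calc p.bypass.length ≤ p.length := Walk.length_bypass_le p
  _ = _ := hp

variable {v w : V}

lemma start_mem_core (h : G.Reachable v w) : v ∈ core G v w := by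
  obtain ⟨p, hp, hl⟩ := exists_geodesic h
  exact ⟨p, hp, hl, p.start_mem_support⟩

lemma end_mem_core (h : G.Reachable v w) : w ∈ core G v w := by
  obtain ⟨p, hp, hl⟩ := exists_geodesic h
  exact ⟨p, hp, hl, p.end_mem_support⟩

lemma core_reachable {z : V} (hz : z ∈ core G v w) : G.Reachable v z ∧ G.Reachable z w := by
  classical
  obtain ⟨p, hp, hl, hzs⟩ := hz
  exact ⟨⟨p.takeUntil z hzs⟩, ⟨p.dropUntil z hzs⟩⟩

lemma core_dist_add {z : V} (hz : z ∈ core G v w) :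
    G.dist v z + G.dist z w = G.dist v w := by
  classical
  have hrz := core_reachable hz
  obtain ⟨p, hp, hl, hzs⟩ := hz
  have hspec := p.take_spec hzs
  have hlen : (p.takeUntil z hzs).length + (p.dropUntil z hzs).length = p.length := by
    rw [← Walk.length_append, hspec]
  have h1 : G.dist v z ≤ (p.takeUntil z hzs).length := dist_le _
  have h2 : G.dist z w ≤ (p.dropUntil z hzs).length := dist_le _
  have h3 : G.dist v w ≤ G.dist v z + G.dist z w := by
    obtain ⟨p1, hp1⟩ := hrz.1.exists_walk_length_eq_dist
    obtain ⟨p2, hp2⟩ := hrz.2.exists_walk_length_eq_dist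
    have h4 := dist_le (p1.append p2)
    rwa [Walk.length_append, hp1, hp2] at h4
  omega

lemma core_mem_ballVerts {a z : V} (ha : a = v ∨ a = w) (hDr : G.dist v w ≤ r / 2)
    (hz : z ∈ core G v w) : z ∈ ballVerts G a r := by
  have hsum := core_dist_add hz
  have hrz := core_reachable hz
  rcases ha with rfl | rfl
  · exact ⟨hrz.1, by omega⟩
  · exact ⟨hrz.2.symm, by rw [SimpleGraph.dist_comm]; omega⟩

lemma core_eq_other {a b z : V} (hab : a = v ∧ b = w ∨ a = w ∧ b = v) (hz : z ∈ core G v w)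
    (h : G.dist a z = G.dist v w) : z = b := by
  have hsum := core_dist_add hz
  have hrz := core_reachable hz
  rcases hab with ⟨rfl, rfl⟩ | ⟨rfl, rfl⟩
  · have h0 : G.dist z b = 0 := by omega
    exact (hrz.2.dist_eq_zero_iff).mp h0
  · rw [SimpleGraph.dist_comm] at h
    have h0 : G.dist b z = 0 := by omega
    exact ((hrz.1.dist_eq_zero_iff).mp h0).symm

lemma not_start_mem_dropUntil_support [DecidableEq V] {x y c : V} {P : G.Walk x y}
    (hP : P.IsPath) (hcs : c ∈ P.support) (hxc : c ≠ x) :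
    x ∉ (P.dropUntil c hcs).support := by
  intro hmem
  have hxtail : x ∈ (P.dropUntil c hcs).support.tail := by
    rw [Walk.support_eq_cons] at hmem
    rcases List.mem_cons.mp hmem with h | h
    · exact absurd h.symm hxc
    · exact h
  have hdecomp : P.support = (P.takeUntil c hcs).support ++ (P.dropUntil c hcs).support.tail := by
    rw [← Walk.support_append, P.take_spec hcs]
  have hnd := hP.support_nodup
  rw [hdecomp] at hnd
  exact (List.disjoint_of_nodup_append hnd) (Walk.start_mem_support _) hxtail

lemma not_end_mem_takeUntil_support [DecidableEq V] {x y c : V} {P : G.Walk x y}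
    (hP : P.IsPath) (hcs : c ∈ P.support) (hyc : c ≠ y) :
    y ∉ (P.takeUntil c hcs).support := by
  intro hmem
  have hytail : y ∈ (P.dropUntil c hcs).support.tail := by
    have h1 : y ∈ (P.dropUntil c hcs).support := Walk.end_mem_support _
    rw [Walk.support_eq_cons] at h1
    rcases List.mem_cons.mp h1 with h | h
    · exact absurd h.symm hyc
    · exact h
  have hdecomp : P.support = (P.takeUntil c hcs).support ++ (P.dropUntil c hcs).support.tail := by
    rw [← Walk.support_append, P.take_spec hcs]
  have hnd := hP.support_nodup
  rw [hdecomp] at hnd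
  exact (List.disjoint_of_nodup_append hnd) hmem hytail

lemma exists_walkIn_of_coe {H : G.Subgraph} {x y : H.verts}
    (hxy : H.coe.Reachable x y) : ∃ Q : G.Walk x y, WalkIn H Q := by
  obtain ⟨q⟩ := hxy
  induction q with
  | nil => exact ⟨Walk.nil, walkIn_nil.mpr (Subtype.coe_prop _)⟩
  | cons h q ih =>
    obtain ⟨Q, hQ⟩ := ih
    exact ⟨Walk.cons (H.adj_sub h) Q, walkIn_cons.mpr ⟨h, hQ⟩⟩

/-- The canonical copy of a vertex `u` in the labelled ball around `a`. -/
def canon (G : SimpleGraph V) (r : ℕ) (v w a u : V) : EVert V :=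
  (u, labelIn G (ball G a r) (core G v w) u)

lemma canon_mem_pexplVerts {a u : V} (ha : a = v ∨ a = w) (hu : u ∈ ballVerts G a r)
    (h1 : u ≠ v) (h2 : u ≠ w) : canon G r v w a u ∈ pexplVerts G v w r := by
  refine ⟨?_, h1, h2⟩
  rcases ha with rfl | rfl
  · exact Or.inl ⟨hu, rfl⟩
  · exact Or.inr ⟨hu, rfl⟩

lemma expl_adj_canon {a u u' : V} (ha : a = v ∨ a = w) (h : (ball G a r).Adj u u') :
    (expl G v w r).Adj (canon G r v w a u) (canon G r v w a u') := by
  rcases ha with rfl | rfl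
  · exact Or.inl ⟨⟨h.fst_mem, rfl⟩, ⟨h.snd_mem, rfl⟩, h⟩
  · exact Or.inr ⟨⟨h.fst_mem, rfl⟩, ⟨h.snd_mem, rfl⟩, h⟩

lemma labelIn_core {a c : V} (hc : c ∈ core G v w) (hca : c ∈ ballVerts G a r) :
    labelIn G (ball G a r) (core G v w) c = {[c]} := by
  ext l
  simp only [labelIn, Set.mem_setOf_eq, Set.mem_singleton_iff]
  constructor
  · rintro ⟨c', hc', p, hp, hin, hmin, rfl⟩
    have h0 : p.length ≤ 0 := hmin c hc Walk.nil Walk.IsPath.nil (walkIn_nil.mpr hca)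
    cases p with
    | nil => simp
    | cons h q => simp at h0
  · rintro rfl
    exact ⟨c, hc, Walk.nil, Walk.IsPath.nil, walkIn_nil.mpr hca,
      fun c' _ q _ _ => Nat.zero_le _, by simp⟩

/-- In the ball around `a'`, the label of a non-core vertex `y` whose only core
neighbour in the ball is `b` (which is adjacent to it) is `{[b, y]}`. -/
lemma labelIn_eq_single_edge {a' y b : V}
    (hbcore : b ∈ core G v w) (hyncore : y ∉ core G v w)
    (hadj : (ball G a' r).Adj b y)
    (hall : ∀ z ∈ core G v w, (ball G a' r).Adj z y → z = b) :
    labelIn G (ball G a' r) (core G v w) y = {[b, y]} := by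
  have hby : b ≠ y := fun h => hyncore (h ▸ hbcore)
  have hE : (Walk.cons hadj.adj_sub Walk.nil : G.Walk b y).IsPath := by
    simp [Walk.isPath_def, hby]
  have hEin : WalkIn (ball G a' r) (Walk.cons hadj.adj_sub Walk.nil) :=
    walkIn_cons.mpr ⟨hadj, walkIn_nil.mpr hadj.snd_mem⟩
  have hmin1 : ∀ c' ∈ core G v w, ∀ q : G.Walk c' y, q.IsPath → WalkIn (ball G a' r) q →
      1 ≤ q.length := by
    intro c' hc' q _ _
    by_contra hlen
    have h0 : q.length = 0 := by omega
    cases q with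
    | nil => exact hyncore hc'
    | cons h q' => simp at h0
  ext l
  simp only [labelIn, Set.mem_setOf_eq, Set.mem_singleton_iff]
  constructor
  · rintro ⟨c, hc, p, hp, hin, hminp, rfl⟩
    have hle : p.length ≤ 1 := hminp b hbcore _ hE hEin
    cases p with
    | nil => exact absurd hc hyncore
    | cons h q =>
      cases q with
      | nil =>
        have hadj' := (walkIn_cons.mp hin).1
        have hcb : c = b := hall c hc hadj'
        subst hcb
        simp
      | cons h' q' =>
        exfalso
        simp [Walk.length_cons] at hle
  · rintro rfl
    exact ⟨b, hbcore, Walk.cons hadj.adj_sub Walk.nil, hE, hEin,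
      fun c' hc' q hq hqin => by simpa using hmin1 c' hc' q hq hqin, by simp⟩

variable (k : (pexpl G v w r).ConnectedComponent)

/-- The component `k` has a vertex adjacent to a copy of `t`. -/
def Good (t : V) : Prop :=
  ∃ (p : EVert V) (hp : p ∈ pexplVerts G v w r) (q : EVert V),
    (pexpl G v w r).connectedComponentMk ⟨p, hp⟩ = k ∧ q.1 = t ∧ (expl G v w r).Adj p q

/-- The canonical copy of `u` in the ball around `a` lies in the component `k`. -/
def InK (a u : V) : Prop :=
  ∃ h : canon G r v w a u ∈ pexplVerts G v w r,
    (pexpl G v w r).connectedComponentMk ⟨canon G r v w a u, h⟩ = k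

variable {k}

lemma pexpl_adj {p q : EVert V} {hp : p ∈ pexplVerts G v w r} {hq : q ∈ pexplVerts G v w r}
    (h : (expl G v w r).Adj p q) :
    (pexpl G v w r).Adj ⟨p, hp⟩ ⟨q, hq⟩ := h

lemma InK.congr {a a' u : V} (h : canon G r v w a u = canon G r v w a' u)
    (hK : InK k a u) : InK k a' u := by
  obtain ⟨hm, hk⟩ := hK
  refine ⟨h ▸ hm, ?_⟩
  rw [← hk]
  congr 1
  exact Subtype.ext h.symm

lemma InK.adj_transfer {a u u' : V} (hK : InK k a u)
    (h' : canon G r v w a u' ∈ pexplVerts G v w r)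
    (hadj : (ball G a r).Adj u u') (ha : a = v ∨ a = w) : InK k a u' := by
  obtain ⟨h, hk⟩ := hK
  refine ⟨h', ?_⟩
  rw [← hk]
  exact ConnectedComponent.sound (pexpl_adj (expl_adj_canon ha hadj.symm)).reachable

lemma good_of_touch {a t y : V} (ha : a = v ∨ a = w) (hK : InK k a y)
    (hadj : (ball G a r).Adj y t) : Good k t := by
  obtain ⟨h, hk⟩ := hK
  exact ⟨canon G r v w a y, h, canon G r v w a t, hk, rfl, expl_adj_canon ha hadj⟩

lemma walk_to_end {a : V} (ha : a = v ∨ a = w) :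
    ∀ {s t : V} (q : G.Walk s t), (t = v ∨ t = w) → WalkIn (ball G a r) q →
      (∀ x ∈ q.support, x = v ∨ x = w → x = t) → s ≠ v → s ≠ w →
      InK k a s → Good k t := by
  intro s t q
  induction q with
  | nil =>
    intro ht _ _ hsv hsw _
    rcases ht with rfl | rfl
    · exact absurd rfl hsv
    · exact absurd rfl hsw
  | @cons s s' t' h q' ih =>
    intro ht hin havoid hsv hsw hK
    rw [walkIn_cons] at hin
    by_cases hs' : s' = v ∨ s' = w
    · have hst : s' = t' :=
        havoid s' (by rw [Walk.support_cons]; exact List.mem_cons_of_mem _ (Walk.start_mem_support _)) hs'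
      subst hst
      exact good_of_touch ha hK hin.1
    · push_neg at hs'
      have h' : canon G r v w a s' ∈ pexplVerts G v w r :=
        canon_mem_pexplVerts ha hin.1.snd_mem hs'.1 hs'.2
      exact ih ht hin.2
        (fun x hx => havoid x (by rw [Walk.support_cons]; exact List.mem_cons_of_mem _ hx))
        hs'.1 hs'.2 (hK.adj_transfer h' hin.1 ha)

lemma coreBoth (hvw : G.Reachable v w) (hDr : G.dist v w ≤ r / 2)
    {a c : V} (hc : c ∈ core G v w) (hcv : c ≠ v) (hcw : c ≠ w)
    (ha : a = v ∨ a = w) (hK : InK k a c) :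
    Good k v ∧ Good k w := by
  classical
  obtain ⟨P, hP, hPl, hcs⟩ := hc
  have hccore : c ∈ core G v w := ⟨P, hP, hPl, hcs⟩
  have hPv : WalkIn (ball G v r) P := walkIn_ball_start P hPl hDr
  have hPw : WalkIn (ball G w r) P := walkIn_ball_end P hPl hDr
  have hcball_v : c ∈ ballVerts G v r := hPv.mem_verts hcs
  have hcball_w : c ∈ ballVerts G w r := hPw.mem_verts hcs
  have hcanon_vw : canon G r v w v c = canon G r v w w c := by
    unfold canon
    rw [labelIn_core hccore hcball_v, labelIn_core hccore hcball_w]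
  have hKv : InK k v c := by
    rcases ha with rfl | rfl
    · exact hK
    · exact hK.congr hcanon_vw.symm
  have hKw : InK k w c := hKv.congr hcanon_vw
  constructor
  · -- Good v via the walk from c back to v inside the ball around w
    refine walk_to_end (a := w) (Or.inr rfl) (P.takeUntil c hcs).reverse (Or.inl rfl)
      (walkIn_reverse.mpr (hPw.takeUntil hcs)) ?_ hcv hcw hKw
    intro x hx hxvw
    rw [Walk.support_reverse, List.mem_reverse] at hx
    rcases hxvw with rfl | rfl
    · rfl
    · exact absurd hx (not_end_mem_takeUntil_support hP hcs hcw)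
  · -- Good w via the walk from c to w inside the ball around v
    refine walk_to_end (a := v) (Or.inl rfl) (P.dropUntil c hcs) (Or.inr rfl)
      (hPv.dropUntil hcs) ?_ hcv hcw hKv
    intro x hx hxvw
    rcases hxvw with rfl | rfl
    · exact absurd hx (not_start_mem_dropUntil_support hP hcs hcv)
    · rfl

lemma explore {a b : V} (hvw : G.Reachable v w) (hDr : G.dist v w ≤ r / 2)
    (hab : a = v ∧ b = w ∨ a = w ∧ b = v) :
    ∀ {s x : V} (q : G.Walk s x), WalkIn (ball G a r) q → (∀ y ∈ q.support, y ≠ a) →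
      x ∈ core G v w → s ≠ v → s ≠ w → InK k a s →
      (Good k v ∧ Good k w) ∨ ∃ y, InK k a y ∧ (ball G a r).Adj y b := by
  have ha : a = v ∨ a = w := by
    rcases hab with ⟨rfl, -⟩ | ⟨rfl, -⟩
    · exact Or.inl rfl
    · exact Or.inr rfl
  have hvcore := start_mem_core hvw
  have hwcore := end_mem_core hvw
  intro s x q
  induction q with
  | nil =>
    intro hin _ hcore hsv hsw hK
    exact Or.inl (coreBoth hvw hDr hcore hsv hsw ha hK)
  | @cons s s' x' h q' ih =>
    intro hin havoid hcore hsv hsw hK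
    rw [walkIn_cons] at hin
    have hs'a : s' ≠ a :=
      havoid s' (by rw [Walk.support_cons]; exact List.mem_cons_of_mem _ (Walk.start_mem_support _))
    by_cases hs'core : s' ∈ core G v w
    · by_cases hs'b : s' = b
      · subst hs'b
        exact Or.inr ⟨s, hK, hin.1⟩
      · have hs'v : s' ≠ v := by
          rcases hab with ⟨rfl, rfl⟩ | ⟨rfl, rfl⟩
          · exact hs'a
          · exact hs'b
        have hs'w : s' ≠ w := by
          rcases hab with ⟨rfl, rfl⟩ | ⟨rfl, rfl⟩
          · exact hs'b
          · exact hs'a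
        have h' := canon_mem_pexplVerts ha hin.1.snd_mem hs'v hs'w
        exact Or.inl (coreBoth hvw hDr hs'core hs'v hs'w ha (hK.adj_transfer h' hin.1 ha))
    · have hs'v : s' ≠ v := fun hh => hs'core (hh ▸ hvcore)
      have hs'w : s' ≠ w := fun hh => hs'core (hh ▸ hwcore)
      have h' := canon_mem_pexplVerts ha hin.1.snd_mem hs'v hs'w
      exact ih hin.2
        (fun y hy => havoid y (by rw [Walk.support_cons]; exact List.mem_cons_of_mem _ hy))
        hcore hs'v hs'w (hK.adj_transfer h' hin.1 ha)

end Stmt8Aux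


/-- In an `r`-locally 2-connected graph, every component of the punctured
explorer-neighbourhood of an `r`-local 2-separator `{v,w}` has both `v` and `w` in its
neighbourhood. -/
theorem stmt8 {V : Type u} (G : SimpleGraph V) (r : ℕ)
    (h2c : LocallyTwoConnected G r) (v w : V) (hsep : IsLocalTwoSep G r v w)
    (k : (pexpl G v w r).ConnectedComponent) :
    (∃ (p : EVert V) (hp : p ∈ pexplVerts G v w r) (q : EVert V),
      (pexpl G v w r).connectedComponentMk ⟨p, hp⟩ = k ∧ q.1 = v ∧ (expl G v w r).Adj p q) ∧
    (∃ (p : EVert V) (hp : p ∈ pexplVerts G v w r) (q : EVert V),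
      (pexpl G v w r).connectedComponentMk ⟨p, hp⟩ = k ∧ q.1 = w ∧ (expl G v w r).Adj p q) := by
  classical
  obtain ⟨hne, hvw, h2D, -⟩ := hsep
  obtain ⟨hGconn, hncut, u', cyc, hcyc, hcyclen⟩ := h2c
  have hr3 : 3 ≤ r := le_trans hcyc.three_le_length hcyclen
  have hr2 : 1 ≤ r / 2 := by omega
  have hD1 : 1 ≤ G.dist v w := hvw.pos_dist_of_ne hne
  have hDr : G.dist v w ≤ r / 2 := by omega
  have hvcore := start_mem_core hvw
  have hwcore := end_mem_core hvw
  obtain ⟨⟨p₀, hp₀⟩, hk₀⟩ := k.exists_rep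
  have hex := hp₀.1
  suffices H : ∀ a b : V, (a = v ∧ b = w ∨ a = w ∧ b = v) →
      inCopy G v w r a p₀ → (Good k v ∧ Good k w) by
    rcases hex with hcopy | hcopy
    · exact H v w (Or.inl ⟨rfl, rfl⟩) hcopy
    · exact H w v (Or.inr ⟨rfl, rfl⟩) hcopy
  intro a b hab hcopy
  have ha : a = v ∨ a = w := by
    rcases hab with ⟨rfl, -⟩ | ⟨rfl, -⟩
    · exact Or.inl rfl
    · exact Or.inr rfl
  have hb : b = v ∨ b = w := by
    rcases hab with ⟨-, rfl⟩ | ⟨-, rfl⟩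
    · exact Or.inr rfl
    · exact Or.inl rfl
  have hacore : a ∈ core G v w := by
    rcases ha with rfl | rfl
    · exact hvcore
    · exact hwcore
  have hbcore : b ∈ core G v w := by
    rcases hb with rfl | rfl
    · exact hvcore
    · exact hwcore
  have hnab : a ≠ b := by
    rcases hab with ⟨rfl, rfl⟩ | ⟨rfl, rfl⟩
    · exact hne
    · exact hne.symm
  have hdab : G.dist a b = G.dist v w := by
    rcases hab with ⟨rfl, rfl⟩ | ⟨rfl, rfl⟩
    · rfl
    · exact SimpleGraph.dist_comm
  have hrab : G.Reachable a b := by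
    rcases hab with ⟨rfl, rfl⟩ | ⟨rfl, rfl⟩
    · exact hvw
    · exact hvw.symm
  have assemble : Good k a ∧ Good k b → Good k v ∧ Good k w := by
    rcases hab with ⟨rfl, rfl⟩ | ⟨rfl, rfl⟩
    · exact id
    · exact fun hh => ⟨hh.2, hh.1⟩
  have hu₀v : p₀.1 ≠ v := hp₀.2.1
  have hu₀w : p₀.1 ≠ w := hp₀.2.2
  have hu₀a : p₀.1 ≠ a := by
    rcases ha with rfl | rfl
    · exact hu₀v
    · exact hu₀w
  have hcanon₀ : canon G r v w a p₀.1 = p₀ := Prod.ext rfl hcopy.2.symm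
  have hK₀ : InK k a p₀.1 := by
    refine ⟨hcanon₀ ▸ hp₀, ?_⟩
    rw [show (⟨canon G r v w a p₀.1, hcanon₀ ▸ hp₀⟩ : pexplVerts G v w r) = ⟨p₀, hp₀⟩ from
      Subtype.ext hcanon₀]
    exact hk₀
  have hconn_a : ((ball G a r).deleteVerts {a}).coe.Connected := not_not.mp (hncut a)
  have hu₀mem : p₀.1 ∈ ((ball G a r).deleteVerts {a}).verts := by
    rw [Subgraph.deleteVerts_verts]
    exact ⟨hcopy.1, by simpa using hu₀a⟩
  have hbmem : b ∈ ((ball G a r).deleteVerts {a}).verts := by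
    rw [Subgraph.deleteVerts_verts]
    exact ⟨⟨hrab, by omega⟩, by simpa using hnab.symm⟩
  obtain ⟨Q, hQ⟩ := exists_walkIn_of_coe (hconn_a.preconnected ⟨p₀.1, hu₀mem⟩ ⟨b, hbmem⟩)
  have hQball : WalkIn (ball G a r) Q := hQ.mono (Subgraph.deleteVerts_le)
  have hQavoid : ∀ y ∈ Q.support, y ≠ a := by
    intro y hy
    have h1 := hQ.mem_verts hy
    rw [Subgraph.deleteVerts_verts] at h1
    simpa using h1.2
  rcases explore hvw hDr hab Q hQball hQavoid hbcore hu₀v hu₀w hK₀ with hdone | ⟨y₁, hy₁K, hy₁adj⟩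
  · exact hdone
  · have hGb : Good k b := good_of_touch ha hy₁K hy₁adj
    obtain ⟨hy₁mem, hy₁k⟩ := hy₁K
    have hy₁K' : InK k a y₁ := ⟨hy₁mem, hy₁k⟩
    have hy₁v : y₁ ≠ v := hy₁mem.2.1
    have hy₁w : y₁ ≠ w := hy₁mem.2.2
    have hy₁ball : y₁ ∈ ballVerts G a r := hy₁adj.fst_mem
    by_cases hy₁core : y₁ ∈ core G v w
    · exact coreBoth hvw hDr hy₁core hy₁v hy₁w ha hy₁K'
    by_cases hya : (ball G a r).Adj y₁ a
    · exact assemble ⟨good_of_touch ha hy₁K' hya, hGb⟩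
    by_cases hzex : ∃ z, z ∈ core G v w ∧ z ≠ v ∧ z ≠ w ∧ (ball G a r).Adj z y₁
    · obtain ⟨z, hz1, hz2, hz3, hz4⟩ := hzex
      have h' := canon_mem_pexplVerts (v := v) (w := w) ha hz4.fst_mem hz2 hz3
      exact coreBoth hvw hDr hz1 hz2 hz3 ha (hy₁K'.adj_transfer h' hz4.symm ha)
    · have KZ : ∀ z ∈ core G v w, (ball G a r).Adj z y₁ → z = b := by
        intro z hzc hzadj
        by_contra hzb
        have hza : z ≠ a := by
          rintro rfl
          exact hya hzadj.symm
        have hzv : z ≠ v := by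
          rcases hab with ⟨rfl, rfl⟩ | ⟨rfl, rfl⟩
          · exact hza
          · exact hzb
        have hzw : z ≠ w := by
          rcases hab with ⟨rfl, rfl⟩ | ⟨rfl, rfl⟩
          · exact hzb
          · exact hza
        exact hzex ⟨z, hzc, hzv, hzw, hzadj⟩
      have hGadj : G.Adj b y₁ := hy₁adj.adj_sub.symm
      have hy₁ballb : y₁ ∈ ballVerts G b r :=
        ⟨⟨hGadj.toWalk⟩, by have := dist_le hGadj.toWalk; simp at this; omega⟩
      have hbballb : b ∈ ballVerts G b r := ⟨Reachable.refl b, by rw [SimpleGraph.dist_self]; omega⟩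
      have hadj_bb : (ball G b r).Adj b y₁ := by
        refine ⟨hGadj, hbballb, hy₁ballb, fun _ hc => ?_⟩
        rw [SimpleGraph.dist_self] at hc
        omega
      have hadj_ab : (ball G a r).Adj b y₁ := hy₁adj.symm
      have hLa : labelIn G (ball G a r) (core G v w) y₁ = {[b, y₁]} :=
        labelIn_eq_single_edge hbcore hy₁core hadj_ab KZ
      have KZb : ∀ z ∈ core G v w, (ball G b r).Adj z y₁ → z = b := by
        intro z hzc hzadj
        by_contra hzb
        have hdaz : G.dist a z ≤ G.dist v w := by
          have hsum := core_dist_add hzc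
          rcases ha with rfl | rfl
          · omega
          · rw [SimpleGraph.dist_comm]; omega
        have hzball_a : z ∈ ballVerts G a r := core_mem_ballVerts ha hDr hzc
        have hadj_az : (ball G a r).Adj z y₁ := by
          refine ⟨hzadj.adj_sub, hzball_a, hy₁ball, ?_⟩
          rintro heven ⟨h1, h2⟩
          have hdz : G.dist a z = G.dist v w := by omega
          exact hzb (core_eq_other hab hzc hdz)
        exact hzb (KZ z hzc hadj_az)
      have hLb : labelIn G (ball G b r) (core G v w) y₁ = {[b, y₁]} :=
        labelIn_eq_single_edge hbcore hy₁core hadj_bb KZb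
      have hcanon_ab : canon G r v w a y₁ = canon G r v w b y₁ := by
        unfold canon
        rw [hLa, hLb]
      have hKb : InK k b y₁ := hy₁K'.congr hcanon_ab
      have hconn_b : ((ball G b r).deleteVerts {b}).coe.Connected := not_not.mp (hncut b)
      have hy₁b : y₁ ≠ b := fun h => hy₁core (h ▸ hbcore)
      have hy₁memb : y₁ ∈ ((ball G b r).deleteVerts {b}).verts := by
        rw [Subgraph.deleteVerts_verts]
        exact ⟨hy₁ballb, by simpa using hy₁b⟩
      have hamemb : a ∈ ((ball G b r).deleteVerts {b}).verts := by
        rw [Subgraph.deleteVerts_verts]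
        refine ⟨⟨hrab.symm, by rw [SimpleGraph.dist_comm]; omega⟩, by simpa using hnab⟩
      obtain ⟨Q₂, hQ₂⟩ := exists_walkIn_of_coe (hconn_b.preconnected ⟨y₁, hy₁memb⟩ ⟨a, hamemb⟩)
      have hQ₂ball : WalkIn (ball G b r) Q₂ := hQ₂.mono (Subgraph.deleteVerts_le)
      have hQ₂avoid : ∀ y ∈ Q₂.support, y ≠ b := by
        intro y hy
        have h1 := hQ₂.mem_verts hy
        rw [Subgraph.deleteVerts_verts] at h1
        simpa using h1.2
      have hab' : b = v ∧ a = w ∨ b = w ∧ a = v := by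
        rcases hab with ⟨rfl, rfl⟩ | ⟨rfl, rfl⟩
        · exact Or.inr ⟨rfl, rfl⟩
        · exact Or.inl ⟨rfl, rfl⟩
      rcases explore hvw hDr hab' Q₂ hQ₂ball hQ₂avoid hacore hy₁v hy₁w hKb with
        hdone | ⟨y₂, hy₂K, hy₂adj⟩
      · exact hdone
      · exact assemble ⟨good_of_touch hb hy₂K hy₂adj, hGb⟩

end LocalSep
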